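/- Let P be a puzzle of width k, let e ∈ {1,2,3}, and let P' be the puzzle of width k+1 obtained from P by appending to every row of P a new column whose entry is e in every row. Then P is a strong uniquely solvable puzzle if and only if P' is a strong uniquely solvable puzzle. -/
import Mathlib


/-- Exactly two of the three propositions hold. -/
def ExactlyTwo (A B C : Prop) : Prop :=
  (A ∧ B ∧ ¬C) ∨ (A ∧ ¬B ∧ C) ∨ (¬A ∧ B ∧ C)

/-- At least two of the three propositions hold. -/
def AtLeastTwo (A B C : Prop) : Prop :=
  (A ∧ B) ∨ (A ∧ C) ∨ (B ∧ C)

/-- A puzzle of width `k` is a finite set of rows in `{1,2,3}^k`; we use the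
alphabet `Fin 3` whose three elements are denoted `1`, `2`, `3` (`3 = 0`).
`P` is a strong uniquely solvable puzzle (strong USP). -/
def IsSUSP {k : ℕ} (P : Finset (Fin k → Fin 3)) : Prop :=
  ∀ π₁ π₂ π₃ : Equiv.Perm {r // r ∈ P},
    (π₁ = π₂ ∧ π₂ = π₃) ∨
    ∃ (r : {r // r ∈ P}) (c : Fin k),
      ExactlyTwo ((π₁ r).1 c = 1) ((π₂ r).1 c = 2) ((π₃ r).1 c = 3)

/-- Adding (or removing) a constant column preserves the strong-USP
property: `P` is a strong USP iff the puzzle obtained by appending to every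
row a new column with the constant entry `e ∈ {1,2,3}` is a strong USP. -/
theorem susp_constant_column {k : ℕ} (P : Finset (Fin k → Fin 3))
    (e : Fin 3) (he : e = 1 ∨ e = 2 ∨ e = 3) :
    IsSUSP P ↔ IsSUSP (P.image (fun r => Fin.snoc r e)) := by
  set f : (Fin k → Fin 3) → (Fin (k + 1) → Fin 3) := fun r => Fin.snoc r e with hf
  have hmem : ∀ g ∈ P.image f, Fin.init g ∈ P ∧ Fin.snoc (Fin.init g) e = g := by
    intro g hg
    obtain ⟨a, ha, hfa⟩ := Finset.mem_image.mp hg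
    subst hfa
    simp [f, Fin.init_snoc, ha]
  let ι : {r // r ∈ P} ≃ {r // r ∈ P.image f} :=
  { toFun := fun r => ⟨f r.1, Finset.mem_image_of_mem f r.2⟩
    invFun := fun g => ⟨Fin.init g.1, (hmem g.1 g.2).1⟩
    left_inv := fun r => Subtype.ext (by simp [f, Fin.init_snoc])
    right_inv := fun g => Subtype.ext (hmem g.1 g.2).2 }
  constructor
  · intro h π₁' π₂' π₃'
    obtain h0 | ⟨r, c, hc⟩ :=
      h (ι.permCongr.symm π₁') (ι.permCongr.symm π₂') (ι.permCongr.symm π₃')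
    · exact Or.inl ⟨ι.permCongr.symm.injective h0.1, ι.permCongr.symm.injective h0.2⟩
    · refine Or.inr ⟨ι r, c.castSucc, ?_⟩
      have key : ∀ π' : Equiv.Perm {r // r ∈ P.image f},
          (π' (ι r)).1 c.castSucc = ((ι.permCongr.symm π') r).1 c := by
        intro π'
        simp [Equiv.permCongr_symm, Equiv.permCongr_apply, ι, Fin.init]
      rw [key π₁', key π₂', key π₃']
      exact hc
  · intro h π₁ π₂ π₃
    obtain h0 | ⟨r', c', hc⟩ := h (ι.permCongr π₁) (ι.permCongr π₂) (ι.permCongr π₃)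
    · exact Or.inl ⟨ι.permCongr.injective h0.1, ι.permCongr.injective h0.2⟩
    · rcases Fin.eq_castSucc_or_eq_last c' with ⟨c, rfl⟩ | rfl
      · refine Or.inr ⟨ι.symm r', c, ?_⟩
        have key : ∀ π : Equiv.Perm {r // r ∈ P},
            ((ι.permCongr π) r').1 c.castSucc = (π (ι.symm r')).1 c := by
          intro π
          simp [Equiv.permCongr_apply, ι, f, Fin.snoc_castSucc]
        rw [key π₁, key π₂, key π₃] at hc
        exact hc
      · exfalso
        have hlast : ∀ π : Equiv.Perm {r // r ∈ P},
            ((ι.permCongr π) r').1 (Fin.last k) = e := by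
          intro π
          simp [Equiv.permCongr_apply, ι, f, Fin.snoc_last]
        rw [hlast π₁, hlast π₂, hlast π₃] at hc
        rcases hc with ⟨h1, h2, -⟩ | ⟨h1, -, h2⟩ | ⟨-, h1, h2⟩
        · exact absurd (h1.symm.trans h2) (by decide)
        · exact absurd (h1.symm.trans h2) (by decide)
        · exact absurd (h1.symm.trans h2) (by decide)
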